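/- Let A(ξ) = ξ₁⁴ + 2β ξ₁²ξ₂² + ξ₂⁴ with 0 < β < 3 (strongly convex case). Fix x ∈ ℝ² \ {0} and suppose q ∈ ℝ² satisfies (1/4)∇A(q) = x. Then A(q) = p₊(x)^{4/3}, where p₊(x) = sup_{ξ≠0} (x·ξ)/A(ξ)^{1/4}. -/

import Mathlib

/-- The quartic symbol `A(ξ) = ξ₁⁴ + 2β ξ₁²ξ₂² + ξ₂⁴`. -/
noncomputable def symbA (β : ℝ) (ξ : ℝ × ℝ) : ℝ :=
  ξ.1 ^ 4 + 2 * β * ξ.1 ^ 2 * ξ.2 ^ 2 + ξ.2 ^ 4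

/-- The dual Finsler metric `p₊(x) = sup_{ξ ≠ 0} (x·ξ)/A(ξ)^{1/4}`. -/
noncomputable def pstar (β : ℝ) (x : ℝ × ℝ) : ℝ :=
  sSup {r : ℝ | ∃ ξ : ℝ × ℝ, ξ ≠ 0 ∧
    r = (x.1 * ξ.1 + x.2 * ξ.2) / (symbA β ξ) ^ ((1 : ℝ) / 4)}

lemma symbA_pos {β : ℝ} (hβ : 0 < β) {ξ : ℝ × ℝ} (hξ : ξ ≠ 0) :
    0 < symbA β ξ := by
  have h : ξ.1 ≠ 0 ∨ ξ.2 ≠ 0 := by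
    by_contra h
    push_neg at h
    exact hξ (Prod.ext h.1 h.2)
  unfold symbA
  rcases h with h | h
  · have h1 : 0 < ξ.1 ^ 4 := by positivity
    nlinarith [sq_nonneg (ξ.1 * ξ.2), sq_nonneg (ξ.2 ^ 2)]
  · have h1 : 0 < ξ.2 ^ 4 := by positivity
    nlinarith [sq_nonneg (ξ.1 * ξ.2), sq_nonneg (ξ.1 ^ 2)]

/-- Gradient (convexity) inequality for the quartic A, with explicit SOS certificate. -/
lemma grad_ineq (β q1 q2 e1 e2 : ℝ) (hβ0 : 0 ≤ β) (hβ3 : β ≤ 3) :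
    4 * (q1 ^ 3 + β * q1 * q2 ^ 2) * e1 + 4 * (β * q1 ^ 2 * q2 + q2 ^ 3) * e2 ≤
      e1 ^ 4 + 2 * β * e1 ^ 2 * e2 ^ 2 + e2 ^ 4 +
        3 * (q1 ^ 4 + 2 * β * q1 ^ 2 * q2 ^ 2 + q2 ^ 4) := by
  nlinarith [mul_nonneg hβ0 (sq_nonneg (e1 * e2 - q1 * q2)),
    mul_nonneg hβ0 (sq_nonneg (q2 * e1 + q1 * e2 - 2 * q1 * q2)),
    mul_nonneg hβ0 (sq_nonneg (e1 ^ 2 + e2 ^ 2 - q1 ^ 2 - q2 ^ 2)),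
    mul_nonneg hβ0 (sq_nonneg (q1 * e1 + q2 * e2 - q1 ^ 2 - q2 ^ 2)),
    mul_nonneg (by linarith : (0:ℝ) ≤ 3 - β) (sq_nonneg (e1 ^ 2 - q1 ^ 2)),
    mul_nonneg (by linarith : (0:ℝ) ≤ 3 - β) (sq_nonneg (q1 * (e1 - q1))),
    mul_nonneg (by linarith : (0:ℝ) ≤ 3 - β) (sq_nonneg (e2 ^ 2 - q2 ^ 2)),
    mul_nonneg (by linarith : (0:ℝ) ≤ 3 - β) (sq_nonneg (q2 * (e2 - q2)))]

lemma rpow4 {a : ℝ} (ha : 0 ≤ a) : (a ^ ((1 : ℝ) / 4)) ^ (4 : ℕ) = a := by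
  rw [← Real.rpow_natCast (a ^ ((1 : ℝ) / 4)) 4, ← Real.rpow_mul ha]
  norm_num

/-- in the strongly convex case `0 < β < 3`, if `x ≠ 0` and
`(1/4)∇A(q) = x`, then `A(q) = p₊(x)^{4/3}`. -/
theorem stmt14 (β : ℝ) (hβ1 : 0 < β) (hβ2 : β < 3)
    (x q : ℝ × ℝ) (hx : x ≠ 0)
    (hq1 : q.1 ^ 3 + β * q.1 * q.2 ^ 2 = x.1)
    (hq2 : β * q.1 ^ 2 * q.2 + q.2 ^ 3 = x.2) :
    symbA β q = (pstar β x) ^ ((4 : ℝ) / 3) := by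
  have hq0 : q ≠ 0 := by
    rintro rfl
    apply hx
    apply Prod.ext
    · simpa using hq1.symm
    · simpa using hq2.symm
  set a := symbA β q with ha_def
  have ha : 0 < a := symbA_pos hβ1 hq0
  have ha14 : (0:ℝ) < a ^ ((1:ℝ)/4) := Real.rpow_pos_of_pos ha _
  have h34 : a ^ ((3:ℝ)/4) * a ^ ((1:ℝ)/4) = a := by
    rw [← Real.rpow_add ha]; norm_num
  have hxq : x.1 * q.1 + x.2 * q.2 = a := by
    rw [← hq1, ← hq2, ha_def]; unfold symbA; ring
  have hgreat : IsGreatest {r : ℝ | ∃ ξ : ℝ × ℝ, ξ ≠ 0 ∧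
      r = (x.1 * ξ.1 + x.2 * ξ.2) / (symbA β ξ) ^ ((1 : ℝ) / 4)}
      (a ^ ((3:ℝ)/4)) := by
    constructor
    · refine ⟨q, hq0, ?_⟩
      rw [hxq, ← ha_def, eq_div_iff (ne_of_gt ha14)]
      exact h34
    · rintro r ⟨ξ, hξ0, rfl⟩
      have hc : 0 < symbA β ξ := symbA_pos hβ1 hξ0
      set c := symbA β ξ with hc_def
      have hc14 : (0:ℝ) < c ^ ((1:ℝ)/4) := Real.rpow_pos_of_pos hc _
      set t := a ^ ((1:ℝ)/4) / c ^ ((1:ℝ)/4) with ht_def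
      have ht : 0 < t := div_pos ha14 hc14
      have ht4 : t ^ (4:ℕ) * c = a := by
        rw [ht_def, div_pow, rpow4 ha.le, rpow4 hc.le,
          div_mul_eq_mul_div, mul_div_assoc, div_self (ne_of_gt hc), mul_one]
      have hgi := grad_ineq β q.1 q.2 (t * ξ.1) (t * ξ.2) hβ1.le hβ2.le
      have e1 : 4 * (q.1 ^ 3 + β * q.1 * q.2 ^ 2) * (t * ξ.1) +
          4 * (β * q.1 ^ 2 * q.2 + q.2 ^ 3) * (t * ξ.2) =
          4 * t * (x.1 * ξ.1 + x.2 * ξ.2) := by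
        rw [← hq1, ← hq2]; ring
      have e2 : (t * ξ.1) ^ 4 + 2 * β * (t * ξ.1) ^ 2 * (t * ξ.2) ^ 2 +
          (t * ξ.2) ^ 4 + 3 * (q.1 ^ 4 + 2 * β * q.1 ^ 2 * q.2 ^ 2 + q.2 ^ 4) =
          t ^ (4:ℕ) * c + 3 * a := by
        rw [hc_def, ha_def]; unfold symbA; ring
      rw [e1, e2, ht4] at hgi
      -- hgi : 4 * t * (x·ξ) ≤ a + 3 * a
      have hst : (x.1 * ξ.1 + x.2 * ξ.2) * t ≤ a := by nlinarith
      have hat : (a ^ ((3:ℝ)/4) * c ^ ((1:ℝ)/4)) * t = a := by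
        rw [ht_def]
        field_simp
        exact h34
      rw [div_le_iff₀ hc14]
      have := hat ▸ hst
      exact le_of_mul_le_mul_right this ht
  rw [pstar, hgreat.csSup_eq, ← Real.rpow_mul ha.le]
  norm_num
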